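/- Let q be real with 0 < q < 1, and let [k]_q = (1-q^k)/(1-q). Define Z_n[s_1,…,s_m] = ∑_{n ≥ k_1 ≥ ⋯ ≥ k_m ≥ 1} ∏_{j=1}^m q^{k_j}[k_j]_q^{-s_j} and A_n[s_1,…,s_m] = ∑_{n ≥ k_1 ≥ ⋯ ≥ k_m ≥ 1} (-1)^{k_1+1} q^{k_1(k_1+1)/2} C_q(n,k_1) ∏_{j=1}^m q^{(s_j-1)k_j}[k_j]_q^{-s_j}. Then for all positive integers n, r, a_1,b_1,…,a_r,b_r: Z_n applied to the composition ({1}^{a_1-1}, b_1+1, {1}^{a_2-1}, b_2+1, …, {1}^{a_{r-1}-1}, b_{r-1}+1, {1}^{a_r-1}, b_r) equals A_n applied to (a_1, {1}^{b_1-1}, a_2+1, {1}^{b_2-1}, …, a_r+1, {1}^{b_r-1}). -/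

import Mathlib

/-- Gaussian binomial coefficient, vanishing unless `k ≤ n`. -/
noncomputable def qbinom (q : ℝ) (n k : ℕ) : ℝ :=
  if k ≤ n then ∏ j ∈ Finset.Icc 1 k, (1 - q ^ (n - k + j)) / (1 - q ^ j) else 0

/-- The `q`-analog of a natural number: `[k]_q = (1-q^k)/(1-q)`. -/
noncomputable def qnum (q : ℝ) (k : ℕ) : ℝ := (1 - q ^ k) / (1 - q)

/-- `Zn q n [s₁,…,s_m] = ∑_{n ≥ k₁ ≥ ⋯ ≥ k_m ≥ 1} ∏_j q^{k_j} [k_j]_q^{-s_j}`. -/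
noncomputable def Zn (q : ℝ) : ℕ → List ℕ → ℝ
  | _, [] => 1
  | n, s :: t => ∑ k ∈ Finset.Icc 1 n, q ^ k / (qnum q k) ^ s * Zn q k t

/-- `Wn q n [s₁,…,s_m] = ∑_{n ≥ k₁ ≥ ⋯ ≥ k_m ≥ 1} ∏_j q^{(s_j-1) k_j} [k_j]_q^{-s_j}`. -/
noncomputable def Wn (q : ℝ) : ℕ → List ℕ → ℝ
  | _, [] => 1
  | n, s :: t => ∑ k ∈ Finset.Icc 1 n,
      q ^ (((s : ℤ) - 1) * (k : ℤ)) / (qnum q k) ^ s * Wn q k t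

/-- `An q n [s₁,…,s_m] = ∑_{n ≥ k₁ ≥ ⋯ ≥ k_m ≥ 1} (-1)^{k₁+1} q^{k₁(k₁+1)/2} C_q(n,k₁)
    ∏_j q^{(s_j-1) k_j} [k_j]_q^{-s_j}`. -/
noncomputable def An (q : ℝ) (n : ℕ) : List ℕ → ℝ
  | [] => 1
  | s :: t => ∑ k ∈ Finset.Icc 1 n,
      (-1 : ℝ) ^ (k + 1) * q ^ (k * (k + 1) / 2) * qbinom q n k *
        (q ^ (((s : ℤ) - 1) * (k : ℤ)) / (qnum q k) ^ s) * Wn q k t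


open Finset

set_option linter.unusedSectionVars false
namespace QDual

variable {q : ℝ} (hq0 : 0 < q) (hq1 : q < 1)

/-- auxiliary product `P q d k = ∏_{i<k} (1 - q^(d+1+i))`. -/
noncomputable def P (q : ℝ) (d k : ℕ) : ℝ := ∏ i ∈ range k, (1 - q ^ (d + 1 + i))

include hq0 hq1

lemma one_sub_pow_pos {j : ℕ} (hj : 0 < j) : 0 < 1 - q ^ j := by
  have : q ^ j < 1 := pow_lt_one₀ hq0.le hq1 hj.ne'
  linarith

lemma one_sub_ne (j : ℕ) : (1 - q ^ (j + 1)) ≠ 0 :=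
  (one_sub_pow_pos hq0 hq1 (Nat.succ_pos j)).ne'

lemma qnum_pos {k : ℕ} (hk : 0 < k) : 0 < qnum q k := by
  have h1 : 0 < 1 - q := by linarith
  exact div_pos (one_sub_pow_pos hq0 hq1 hk) h1

lemma qnum_ne {k : ℕ} (hk : 0 < k) : qnum q k ≠ 0 := (qnum_pos hq0 hq1 hk).ne'

lemma P_pos (d k : ℕ) : 0 < P q d k := by
  refine Finset.prod_pos fun i _ => ?_
  exact one_sub_pow_pos hq0 hq1 (by omega)

lemma P_ne (d k : ℕ) : P q d k ≠ 0 := (P_pos hq0 hq1 d k).ne'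

omit hq0 hq1

lemma P_succ_top (d k : ℕ) : P q d (k + 1) = P q d k * (1 - q ^ (d + 1 + k)) :=
  prod_range_succ _ _

lemma P_succ_bot (d k : ℕ) : P q d (k + 1) = (1 - q ^ (d + 1)) * P q (d + 1) k := by
  rw [P, prod_range_succ', mul_comm]
  congr 1
  · refine prod_congr rfl fun i _ => ?_
    congr 2
    omega

lemma qbinom_eq {n k : ℕ} (h : k ≤ n) : qbinom q n k = P q (n - k) k / P q 0 k := by
  rw [qbinom, if_pos h, ← Finset.Ico_add_one_right_eq_Icc, prod_Ico_eq_prod_range, P, P,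
    ← prod_div_distrib]
  refine prod_congr (by norm_num) fun i _ => ?_
  have h1 : 1 + i = 0 + 1 + i := by omega
  have h2 : n - k + (1 + i) = n - k + 1 + i := by omega
  rw [h2, ← h1]

lemma qbinom_zero (n : ℕ) : qbinom q n 0 = 1 := by
  simp [qbinom]

lemma qbinom_of_lt {n k : ℕ} (h : n < k) : qbinom q n k = 0 := by
  rw [qbinom, if_neg (by omega)]

include hq0 hq1

lemma qbinom_self (n : ℕ) : qbinom q n n = 1 := by
  rw [qbinom_eq le_rfl, Nat.sub_self]
  exact div_self (P_ne hq0 hq1 0 n)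

lemma qbinom_succ_succ {n k : ℕ} (h : k ≤ n) :
    qbinom q (n + 1) (k + 1) = qbinom q n k * ((1 - q ^ (n + 1)) / (1 - q ^ (k + 1))) := by
  rw [qbinom_eq (by omega), qbinom_eq h]
  have e : n + 1 - (k + 1) = n - k := by omega
  rw [e, P_succ_top, P_succ_top]
  have e2 : n - k + 1 + k = n + 1 := by omega
  have e3 : (0:ℕ) + 1 + k = k + 1 := by omega
  rw [e2, e3]
  field_simp
  try ring

lemma qbinom_shift {n k : ℕ} (h : k + 1 ≤ n) :
    qbinom q n (k + 1) = qbinom q n k * ((1 - q ^ (n - k)) / (1 - q ^ (k + 1))) := by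
  rw [qbinom_eq h, qbinom_eq (by omega : k ≤ n)]
  have e : n - (k + 1) + 1 = n - k := by omega
  rw [P_succ_bot, P_succ_top, e]
  have e3 : (0:ℕ) + 1 + k = k + 1 := by omega
  rw [e3]
  field_simp
  try ring

lemma pascalA (n k : ℕ) :
    qbinom q (n + 1) (k + 1) = qbinom q n k + q ^ (k + 1) * qbinom q n (k + 1) := by
  rcases lt_or_ge n k with h | h
  · rw [qbinom_of_lt h, qbinom_of_lt (by omega), qbinom_of_lt (by omega)]
    ring
  rcases eq_or_lt_of_le h with rfl | h'
  · rw [qbinom_self hq0 hq1, qbinom_self hq0 hq1, qbinom_of_lt (by omega)]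
    ring
  · have hk1 : k + 1 ≤ n := h'
    rw [qbinom_succ_succ hq0 hq1 h, qbinom_shift hq0 hq1 hk1]
    have h1 := one_sub_ne hq0 hq1 k
    have hqnk : q ^ (k + 1) * q ^ (n - k) = q ^ (n + 1) := by
      rw [← pow_add]; congr 1; omega
    field_simp
    linear_combination qbinom q n k * hqnk

lemma pascalB {n k : ℕ} (h : k ≤ n) :
    qbinom q (n + 1) (k + 1) = q ^ (n - k) * qbinom q n k + qbinom q n (k + 1) := by
  rcases eq_or_lt_of_le h with rfl | h'
  · rw [qbinom_self hq0 hq1, qbinom_self hq0 hq1, qbinom_of_lt (by omega), Nat.sub_self]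
    ring
  · have hk1 : k + 1 ≤ n := h'
    rw [qbinom_succ_succ hq0 hq1 h, qbinom_shift hq0 hq1 hk1]
    have h1 := one_sub_ne hq0 hq1 k
    have hqnk : q ^ (n - k) * q ^ (k + 1) = q ^ (n + 1) := by
      rw [← pow_add]; congr 1; omega
    field_simp
    linear_combination qbinom q n k * hqnk

lemma qratio (n k : ℕ) :
    qnum q (k + 1) * qbinom q (n + 1) (k + 1) = qnum q (n + 1) * qbinom q n k := by
  rcases lt_or_ge n k with h | h
  · rw [qbinom_of_lt h, qbinom_of_lt (by omega)]
    ring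
  · rw [qbinom_succ_succ hq0 hq1 h, qnum, qnum]
    have h1 := one_sub_ne hq0 hq1 k
    have h2 : (1 - q) ≠ 0 := by intro hc; nlinarith
    field_simp


omit hq0 hq1

lemma tri_eq (k : ℕ) : k * (k + 1) / 2 = k + k.choose 2 := by
  have h1 : k * (k + 1) / 2 = (k + 1).choose 2 := by
    rw [Nat.choose_two_right]
    congr 1
    simp [Nat.mul_comm]
  rw [h1, Nat.choose_succ_succ, Nat.choose_one_right]

lemma Icc_split {m n : ℕ} (h : m ≤ n) :
    Finset.Icc m n = insert m (Finset.Icc (m + 1) n) := by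
  ext x
  simp only [Finset.mem_Icc, Finset.mem_insert]
  omega

include hq0 hq1

/-- partial alternating sum identity (★). -/
lemma star : ∀ d m : ℕ,
    ∑ l ∈ Icc (m + 1) (m + d + 1), (-1 : ℝ) ^ l * q ^ l.choose 2 * qbinom q (m + d + 1) l
      = (-1) ^ (m + 1) * q ^ (m + 1).choose 2 * qbinom q (m + d) m := by
  intro d
  induction d with
  | zero =>
    intro m
    simp only [Nat.add_zero]
    rw [Icc_self, Finset.sum_singleton, qbinom_self hq0 hq1, qbinom_self hq0 hq1]
  | succ d ih =>
    intro m
    have E : m + (d + 1) = m + 1 + d := by omega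
    rw [E]
    rw [Icc_split (by omega : m + 1 ≤ m + 1 + d + 1),
      Finset.sum_insert (by simp), ih (m + 1)]
    rw [pascalA hq0 hq1 (m + 1 + d) m]
    have e5 : (m + 1 + 1).choose 2 = (m + 1).choose 2 + (m + 1) := by
      rw [Nat.choose_succ_succ (m + 1) 1, Nat.choose_one_right]; norm_num; omega
    rw [e5, pow_add, pow_add]
    ring

lemma star1 {n : ℕ} (hn : 0 < n) :
    ∑ l ∈ Icc 1 n, (-1 : ℝ) ^ (l + 1) * q ^ l.choose 2 * qbinom q n l = 1 := by
  obtain ⟨d, rfl⟩ : ∃ d, n = 0 + d + 1 := ⟨n - 1, by omega⟩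
  have h := star hq0 hq1 d 0
  have : ∑ l ∈ Icc (0+1) (0 + d + 1), (-1 : ℝ) ^ (l + 1) * q ^ l.choose 2 * qbinom q (0+d+1) l
      = -∑ l ∈ Icc (0+1) (0 + d + 1), (-1 : ℝ) ^ l * q ^ l.choose 2 * qbinom q (0+d+1) l := by
    rw [← Finset.sum_neg_distrib]
    refine Finset.sum_congr rfl fun l _ => ?_
    rw [pow_succ]
    ring
  rw [this, h]
  simp [qbinom_zero]

omit hq0 hq1

noncomputable def D (q : ℝ) (n m : ℕ) : ℝ := (-1 : ℝ) ^ (m + 1) * q ^ (m * (m + 1) / 2) * qbinom q n m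

/-- head-weight factor -/
noncomputable def hw (q : ℝ) (k : ℕ) : List ℕ → ℝ
  | [] => 1
  | s :: t => q ^ (((s : ℤ) - 1) * (k : ℤ)) / (qnum q k) ^ s * Wn q k t

lemma An_cons (n s : ℕ) (t : List ℕ) :
    An q n (s :: t) = ∑ k ∈ Icc 1 n, D q n k * hw q k (s :: t) := by
  rw [An]
  refine Finset.sum_congr rfl fun k _ => ?_
  rw [D, hw]
  ring

lemma An_eq {v : List ℕ} (hv : v ≠ []) (n : ℕ) :
    An q n v = ∑ k ∈ Icc 1 n, D q n k * hw q k v := by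
  obtain ⟨s, t, rfl⟩ := List.exists_cons_of_ne_nil hv
  exact An_cons n s t

lemma Wn_eq {v : List ℕ} (hv : v ≠ []) (n : ℕ) :
    Wn q n v = ∑ k ∈ Icc 1 n, hw q k v := by
  obtain ⟨s, t, rfl⟩ := List.exists_cons_of_ne_nil hv
  rw [Wn]
  exact Finset.sum_congr rfl fun k _ => rfl

lemma An_zero {v : List ℕ} (hv : v ≠ []) : An q 0 v = 0 := by
  rw [An_eq hv 0]
  simp

lemma sum_Icc_one (N : ℕ) (f : ℕ → ℝ) :
    ∑ k ∈ Icc 1 N, f k = ∑ j ∈ range N, f (j + 1) := by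
  rw [← Finset.Ico_add_one_right_eq_Icc, Finset.sum_Ico_eq_sum_range]
  refine Finset.sum_congr (by norm_num) fun i _ => by rw [Nat.add_comm]

lemma sum_Icc_shift (a b : ℕ) (f : ℕ → ℝ) :
    ∑ l ∈ Icc (a + 1) (b + 1), f l = ∑ j ∈ Icc a b, f (j + 1) := by
  rw [← Finset.Ico_add_one_right_eq_Icc, ← Finset.Ico_add_one_right_eq_Icc, Finset.sum_Ico_eq_sum_range,
    Finset.sum_Ico_eq_sum_range]
  refine Finset.sum_congr (by congr 1; omega) fun i _ => by congr 1; omega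

include hq0 hq1

lemma An_diff {v : List ℕ} (hv : v ≠ []) (n : ℕ) :
    An q (n + 1) v = An q n v +
      ∑ j ∈ range (n + 1),
        (-1 : ℝ) ^ j * q ^ ((j + 1) * (j + 1 + 1) / 2 + (n - j)) * qbinom q n j
          * hw q (j + 1) v := by
  have h1 : An q (n + 1) v = ∑ j ∈ range (n + 1), D q (n + 1) (j + 1) * hw q (j + 1) v := by
    rw [An_eq hv, sum_Icc_one]
  have h2 : An q n v = ∑ j ∈ range (n + 1), D q n (j + 1) * hw q (j + 1) v := by
    rw [An_eq hv, sum_Icc_one, Finset.sum_range_succ]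
    have : qbinom q n (n + 1) = 0 := qbinom_of_lt (by omega)
    simp [D, this]
  rw [h1, h2, ← Finset.sum_add_distrib]
  refine Finset.sum_congr rfl fun j hj => ?_
  have hjn : j ≤ n := by
    have := Finset.mem_range.mp hj
    omega
  simp only [D]
  rw [pascalB hq0 hq1 hjn, pow_add]
  ring

lemma qratio' (n k : ℕ) :
    qbinom q n k = qnum q (k + 1) * qbinom q (n + 1) (k + 1) / qnum q (n + 1) := by
  rw [eq_div_iff (qnum_ne hq0 hq1 (by omega))]
  linear_combination (-1 : ℝ) * qratio hq0 hq1 n k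

lemma diamond (n i : ℕ) (hi : i ≤ n) :
    ∑ j ∈ Icc i n,
        (-1 : ℝ) ^ j * q ^ ((j + 1) * (j + 1 + 1) / 2 + (n - j)) * qbinom q n j / qnum q (j + 1)
      = (-1 : ℝ) ^ i * q ^ ((i + 1) * (i + 1 + 1) / 2 + (n - i)) * qbinom q n i
          / qnum q (n + 1) := by
  have key : ∀ j, j ≤ n →
      (-1 : ℝ) ^ j * q ^ ((j + 1) * (j + 1 + 1) / 2 + (n - j)) * qbinom q n j / qnum q (j + 1)
      = (q ^ (n + 1) / qnum q (n + 1)) *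
          (-((-1 : ℝ) ^ (j + 1) * q ^ (j + 1).choose 2 * qbinom q (n + 1) (j + 1))) := by
    intro j hj
    rw [qratio' hq0 hq1 n j]
    have he : (j + 1) * (j + 1 + 1) / 2 + (n - j) = (j + 1).choose 2 + (n + 1) := by
      have := tri_eq (j + 1)
      omega
    rw [he, pow_add, pow_succ]
    have h1 := qnum_ne hq0 hq1 (show 0 < j + 1 by omega)
    have h2 := qnum_ne hq0 hq1 (show 0 < n + 1 by omega)
    field_simp
    ring
  rw [Finset.sum_congr rfl fun j hj => key j (Finset.mem_Icc.mp hj).2]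
  rw [← Finset.mul_sum, Finset.sum_neg_distrib]
  have hshift : ∑ j ∈ Icc i n,
      (-1 : ℝ) ^ (j + 1) * q ^ (j + 1).choose 2 * qbinom q (n + 1) (j + 1)
      = ∑ l ∈ Icc (i + 1) (n + 1), (-1 : ℝ) ^ l * q ^ l.choose 2 * qbinom q (n + 1) l := by
    rw [sum_Icc_shift]
  rw [hshift]
  obtain ⟨d, rfl⟩ : ∃ d, n = i + d := ⟨n - i, by omega⟩
  rw [star hq0 hq1 d i]
  have he : (i + 1) * (i + 1 + 1) / 2 + (i + d - i) = (i + 1).choose 2 + (i + d + 1) := by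
    have := tri_eq (i + 1)
    omega
  rw [he, pow_add, pow_succ]
  field_simp
  ring

omit hq0 hq1

def sig : List ℕ → List ℕ
  | [] => [1]
  | s :: t => (s + 1) :: t

lemma rep_sig_ne (b : ℕ) (u : List ℕ) : List.replicate b 1 ++ sig u ≠ [] := by
  cases u <;> cases b <;> simp [sig]

lemma hw_cons_one (k : ℕ) (t : List ℕ) : hw q k (1 :: t) = Wn q k t / qnum q k := by
  simp [hw]
  ring

include hq0 hq1

lemma starstar (b : ℕ) (u : List ℕ) (n : ℕ) :
    ∑ j ∈ range (n + 1),
        (-1 : ℝ) ^ j * q ^ ((j + 1) * (j + 1 + 1) / 2 + (n - j)) * qbinom q n j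
          * hw q (j + 1) (List.replicate b 1 ++ sig u)
      = q ^ (n + 1) / (qnum q (n + 1)) ^ (b + 1) * An q (n + 1) u := by
  have hqne : q ≠ 0 := ne_of_gt hq0
  induction b with
  | zero =>
    simp only [List.replicate, List.nil_append]
    cases u with
    | nil =>
      have hIcc : range (n + 1) = Icc 0 n := by
        rw [← Nat.Ico_zero_eq_range, Finset.Ico_add_one_right_eq_Icc]
      rw [hIcc]
      have h1 : ∑ j ∈ Icc 0 n,
          (-1 : ℝ) ^ j * q ^ ((j + 1) * (j + 1 + 1) / 2 + (n - j)) * qbinom q n j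
            * hw q (j + 1) (sig [])
          = ∑ j ∈ Icc 0 n,
          (-1 : ℝ) ^ j * q ^ ((j + 1) * (j + 1 + 1) / 2 + (n - j)) * qbinom q n j
            / qnum q (j + 1) := by
        refine Finset.sum_congr rfl fun j _ => ?_
        rw [show sig [] = [1] from rfl, hw_cons_one, Wn]
        ring
      rw [h1, diamond hq0 hq1 n 0 (by omega)]
      rw [qbinom_zero, An]
      norm_num
      rw [add_comm 1 n]
    | cons s t =>
      rw [show sig (s :: t) = (s + 1) :: t from rfl]
      rw [An_eq (by simp) (n + 1), sum_Icc_one, Finset.mul_sum]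
      refine Finset.sum_congr rfl fun j hj => ?_
      have hjn : j ≤ n := by have := Finset.mem_range.mp hj; omega
      simp only [hw, D]
      have h1 := qnum_ne hq0 hq1 (show 0 < j + 1 by omega)
      have h2 := qnum_ne hq0 hq1 (show 0 < n + 1 by omega)
      have e1 : q ^ ((((s + 1 : ℕ) : ℤ) - 1) * ((j + 1 : ℕ) : ℤ)) = q ^ (s * (j + 1)) := by
        rw [show (((s + 1 : ℕ) : ℤ) - 1) * ((j + 1 : ℕ) : ℤ) = ((s * (j + 1) : ℕ) : ℤ) by
          push_cast; ring, zpow_natCast]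
      have e2 : q ^ (((s : ℤ) - 1) * ((j + 1 : ℕ) : ℤ)) = q ^ (s * (j + 1)) / q ^ (j + 1) := by
        rw [eq_div_iff (pow_ne_zero _ hqne), ← zpow_natCast q (j + 1),
          ← zpow_add₀ hqne, ← zpow_natCast q (s * (j + 1))]
        congr 1
        push_cast
        ring
      have e4 : q ^ ((j + 1) * (j + 1 + 1) / 2 + (n - j))
          = q ^ ((j + 1) * (j + 1 + 1) / 2) * q ^ (n + 1) / q ^ (j + 1) := by
        rw [eq_div_iff (pow_ne_zero _ hqne), ← pow_add, ← pow_add]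
        congr 1
        omega
      rw [e1, e2, e4, qratio' hq0 hq1 n j]
      field_simp
      ring
  | succ b ih =>
    have hw'' : List.replicate (b + 1) 1 ++ sig u = 1 :: (List.replicate b 1 ++ sig u) := by
      simp [List.replicate]
    rw [hw'']
    have h1 : ∀ j ∈ range (n + 1),
        (-1 : ℝ) ^ j * q ^ ((j + 1) * (j + 1 + 1) / 2 + (n - j)) * qbinom q n j
          * hw q (j + 1) (1 :: (List.replicate b 1 ++ sig u))
        = ∑ i ∈ range (j + 1),
            ((-1 : ℝ) ^ j * q ^ ((j + 1) * (j + 1 + 1) / 2 + (n - j)) * qbinom q n j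
              / qnum q (j + 1)) * hw q (i + 1) (List.replicate b 1 ++ sig u) := by
      intro j _
      rw [hw_cons_one, Wn_eq (rep_sig_ne b u) (j + 1), sum_Icc_one, div_eq_mul_inv,
        Finset.sum_mul, Finset.mul_sum]
      refine Finset.sum_congr rfl fun i _ => ?_
      ring
    rw [Finset.sum_congr rfl h1]
    have hswap : ∑ j ∈ range (n + 1), ∑ i ∈ range (j + 1),
        ((-1 : ℝ) ^ j * q ^ ((j + 1) * (j + 1 + 1) / 2 + (n - j)) * qbinom q n j
          / qnum q (j + 1)) * hw q (i + 1) (List.replicate b 1 ++ sig u)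
        = ∑ i ∈ range (n + 1), ∑ j ∈ Icc i n,
        ((-1 : ℝ) ^ j * q ^ ((j + 1) * (j + 1 + 1) / 2 + (n - j)) * qbinom q n j
          / qnum q (j + 1)) * hw q (i + 1) (List.replicate b 1 ++ sig u) := by
      simp only [← Nat.Ico_zero_eq_range]
      have := Finset.sum_Ico_Ico_comm 0 (n + 1) (fun i j =>
        ((-1 : ℝ) ^ j * q ^ ((j + 1) * (j + 1 + 1) / 2 + (n - j)) * qbinom q n j
          / qnum q (j + 1)) * hw q (i + 1) (List.replicate b 1 ++ sig u))
      rw [← this]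
      refine Finset.sum_congr rfl fun i hi => ?_
      rw [Finset.Ico_add_one_right_eq_Icc]
    rw [hswap]
    have h2 : ∀ i ∈ range (n + 1), ∑ j ∈ Icc i n,
        ((-1 : ℝ) ^ j * q ^ ((j + 1) * (j + 1 + 1) / 2 + (n - j)) * qbinom q n j
          / qnum q (j + 1)) * hw q (i + 1) (List.replicate b 1 ++ sig u)
        = (1 / qnum q (n + 1)) *
          ((-1 : ℝ) ^ i * q ^ ((i + 1) * (i + 1 + 1) / 2 + (n - i)) * qbinom q n i
            * hw q (i + 1) (List.replicate b 1 ++ sig u)) := by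
      intro i hi
      have hin : i ≤ n := by have := Finset.mem_range.mp hi; omega
      rw [← Finset.sum_mul, diamond hq0 hq1 n i hin]
      ring
    rw [Finset.sum_congr rfl h2, ← Finset.mul_sum, ih, pow_succ]
    ring

lemma master (b : ℕ) (u : List ℕ) (n : ℕ) :
    ∑ k ∈ Icc 1 n, q ^ k / (qnum q k) ^ (b + 1) * An q k u
      = An q n (List.replicate b 1 ++ sig u) := by
  induction n with
  | zero =>
    rw [An_zero (rep_sig_ne b u)]
    simp
  | succ n ih =>
    rw [Finset.sum_Icc_succ_top (by omega), ih, An_diff hq0 hq1 (rep_sig_ne b u) n,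
      starstar hq0 hq1 b u n]

omit hq0 hq1

def zstr : List (ℕ × ℕ) → List ℕ
  | [] => []
  | [(a, b)] => List.replicate (a - 1) 1 ++ [b]
  | (a, b) :: p :: rest => List.replicate (a - 1) 1 ++ (b + 1) :: zstr (p :: rest)

def atail : List (ℕ × ℕ) → List ℕ
  | [] => []
  | (a, b) :: rest => (a + 1) :: (List.replicate (b - 1) 1 ++ atail rest)

def astr : List (ℕ × ℕ) → List ℕ
  | [] => []
  | (a, b) :: rest => a :: (List.replicate (b - 1) 1 ++ atail rest)

lemma zstr_cons (p : ℕ × ℕ) (L : List (ℕ × ℕ)) (h : L ≠ []) :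
    zstr (p :: L) = List.replicate (p.1 - 1) 1 ++ (p.2 + 1) :: zstr L := by
  obtain ⟨x, xs, rfl⟩ := List.exists_cons_of_ne_nil h
  obtain ⟨a, b⟩ := p
  rfl

lemma zstr_one (a b : ℕ) (L : List (ℕ × ℕ)) :
    zstr ((a + 1, b) :: L) = List.replicate a 1 ++ zstr ((1, b) :: L) := by
  cases L with
  | nil => simp [zstr]
  | cons x xs => simp [zstr_cons]

lemma sig_astr (p : ℕ × ℕ) (L : List (ℕ × ℕ)) : sig (astr (p :: L)) = atail (p :: L) := by
  obtain ⟨a, b⟩ := p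
  rfl

include hq0 hq1

lemma duality (L : List (ℕ × ℕ)) :
    L ≠ [] → (∀ p ∈ L, 0 < p.1 ∧ 0 < p.2) → ∀ n, Zn q n (zstr L) = An q n (astr L) := by
  induction L with
  | nil => intro h; exact absurd rfl h
  | cons hd rest ih =>
    obtain ⟨a, b⟩ := hd
    intro _ hpos
    obtain ⟨ha, hb⟩ := hpos (a, b) (by simp)
    obtain ⟨b', rfl⟩ : ∃ b', b = b' + 1 := ⟨b - 1, by omega⟩
    have key : ∀ a' n, Zn q n (zstr ((a' + 1, b' + 1) :: rest))
        = An q n (astr ((a' + 1, b' + 1) :: rest)) := by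
      intro a'
      induction a' with
      | zero =>
        intro n
        cases rest with
        | nil =>
          have hz : zstr [(1, b' + 1)] = [b' + 1] := by simp [zstr]
          rw [hz, Zn]
          have h1 : ∀ k, Zn q k ([] : List ℕ) = 1 := fun k => rfl
          have h2 : ∀ k, An q k ([] : List ℕ) = 1 := fun k => rfl
          have hm := master hq0 hq1 b' [] n
          simp only [h2, mul_one] at hm
          simp only [h1, mul_one]
          rw [hm]
          have hlist : List.replicate b' 1 ++ sig [] = 1 :: List.replicate b' 1 := by
            show List.replicate b' 1 ++ [1] = 1 :: List.replicate b' 1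
            rw [← List.replicate_succ' , List.replicate_succ]
          rw [hlist]
          have : astr [(1, b' + 1)] = 1 :: List.replicate b' 1 := by
            simp [astr, atail]
          rw [this]
        | cons x xs =>
          have hz : zstr ((1, b' + 1) :: x :: xs) = (b' + 2) :: zstr (x :: xs) := by
            simp [zstr_cons]
          rw [hz, Zn]
          have hR : ∀ k, Zn q k (zstr (x :: xs)) = An q k (astr (x :: xs)) :=
            ih (by simp) (fun p hp => hpos p (by simp [hp]))
          simp only [hR]
          have hm := master hq0 hq1 (b' + 1) (astr (x :: xs)) n
          rw [show b' + 1 + 1 = b' + 2 from rfl] at hm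
          rw [hm, sig_astr]
          have : astr ((1, b' + 1) :: x :: xs)
              = List.replicate (b' + 1) 1 ++ atail (x :: xs) := by
            simp [astr, List.replicate_succ]
          rw [this]
      | succ a' ihA =>
        intro n
        have hz : zstr ((a' + 1 + 1, b' + 1) :: rest)
            = 1 :: zstr ((a' + 1, b' + 1) :: rest) := by
          rw [zstr_one (a' + 1), zstr_one a', List.replicate_succ, List.cons_append]
        rw [hz, Zn]
        simp only [ihA]
        have hm := master hq0 hq1 0 (astr ((a' + 1, b' + 1) :: rest)) n
        simp only [pow_one, List.replicate, List.nil_append] at hm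
        rw [hm]
        have : sig (astr ((a' + 1, b' + 1) :: rest)) = astr ((a' + 1 + 1, b' + 1) :: rest) := by
          simp [astr, sig]
        rw [this]
    obtain ⟨a', rfl⟩ : ∃ a', a = a' + 1 := ⟨a - 1, by omega⟩
    exact key a'

omit hq0 hq1

lemma zstr_range : ∀ (r : ℕ) (a b : ℕ → ℕ),
    zstr ((List.range (r + 1)).map (fun j => (a j, b j)))
      = (List.range r).flatMap (fun j => List.replicate (a j - 1) 1 ++ [b j + 1])
        ++ (List.replicate (a r - 1) 1 ++ [b r]) := by
  intro r
  induction r with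
  | zero => intro a b; simp [zstr]
  | succ r ih =>
    intro a b
    rw [List.range_succ_eq_map, List.map_cons, List.map_map]
    have hM : (List.range (r + 1)).map ((fun j => (a j, b j)) ∘ Nat.succ)
        = (List.range (r + 1)).map (fun j => (a (j + 1), b (j + 1))) := rfl
    rw [hM, zstr_cons _ _ (by simp), ih (fun j => a (j + 1)) (fun j => b (j + 1))]
    rw [List.range_succ_eq_map, List.flatMap_cons, List.flatMap_map]
    simp only [List.append_assoc, List.cons_append, List.nil_append]

lemma atail_range : ∀ (r : ℕ) (a b : ℕ → ℕ),
    atail ((List.range r).map (fun j => (a j, b j)))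
      = (List.range r).flatMap (fun j => [a j + 1] ++ List.replicate (b j - 1) 1) := by
  intro r
  induction r with
  | zero => intro a b; rfl
  | succ r ih =>
    intro a b
    rw [List.range_succ_eq_map, List.map_cons, List.map_map, List.flatMap_cons,
      List.flatMap_map]
    have hM : (List.range r).map ((fun j => (a j, b j)) ∘ Nat.succ)
        = (List.range r).map (fun j => (a (j + 1), b (j + 1))) := rfl
    rw [hM]
    show (a 0 + 1) :: (List.replicate (b 0 - 1) 1 ++ atail _) = _
    rw [ih (fun j => a (j + 1)) (fun j => b (j + 1))]
    rfl

end QDual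

theorem duality_main (q : ℝ) (hq0 : 0 < q) (hq1 : q < 1) (n r : ℕ) (hn : 0 < n)
    (hr : 0 < r) (a b : ℕ → ℕ) (ha : ∀ j < r, 0 < a j) (hb : ∀ j < r, 0 < b j) :
    Zn q n
      ((List.range (r - 1)).flatMap (fun j => List.replicate (a j - 1) 1 ++ [b j + 1]) ++
        (List.replicate (a (r - 1) - 1) 1 ++ [b (r - 1)]))
    = An q n
      (([a 0] ++ List.replicate (b 0 - 1) 1) ++
        (List.range (r - 1)).flatMap
          (fun j => [a (j + 1) + 1] ++ List.replicate (b (j + 1) - 1) 1)) := by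
  obtain ⟨r', rfl⟩ : ∃ r', r = r' + 1 := ⟨r - 1, by omega⟩
  have hr1 : r' + 1 - 1 = r' := by omega
  rw [hr1]
  set L := (List.range (r' + 1)).map (fun j => (a j, b j)) with hL
  have hzs : QDual.zstr L = (List.range r').flatMap
      (fun j => List.replicate (a j - 1) 1 ++ [b j + 1])
      ++ (List.replicate (a r' - 1) 1 ++ [b r']) := QDual.zstr_range r' a b
  have hM : (List.range r').map ((fun j => (a j, b j)) ∘ Nat.succ)
      = (List.range r').map (fun j => (a (j + 1), b (j + 1))) := rfl
  have has : QDual.astr L = ([a 0] ++ List.replicate (b 0 - 1) 1) ++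
      (List.range r').flatMap (fun j => [a (j + 1) + 1] ++ List.replicate (b (j + 1) - 1) 1) := by
    rw [hL, List.range_succ_eq_map, List.map_cons, List.map_map, hM]
    show a 0 :: (List.replicate (b 0 - 1) 1 ++ QDual.atail _) = _
    rw [QDual.atail_range r' (fun j => a (j + 1)) (fun j => b (j + 1))]
    simp
  rw [← hzs, ← has]
  refine QDual.duality hq0 hq1 L (by simp [hL]) ?_ n
  intro p hp
  rw [hL] at hp
  simp only [List.mem_map, List.mem_range] at hp
  obtain ⟨j, hj, rfl⟩ := hp
  exact ⟨ha j (by omega), hb j (by omega)⟩
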